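/- For any α ∈ (0,1), the function h(μ) defined implicitly for μ ≥ 0 by Φ(h(μ) − μ) − Φ(−h(μ) − μ) = α with h(μ) > 0 is strictly increasing in μ on (0, ∞). -/

import Mathlib

open MeasureTheory

/-- The standard normal CDF. -/
noncomputable def stdNormalCDF (x : ℝ) : ℝ :=
  ∫ t in Set.Iic x, (Real.sqrt (2 * Real.pi))⁻¹ * Real.exp (-t ^ 2 / 2)

noncomputable def npdf (t : ℝ) : ℝ := (Real.sqrt (2 * Real.pi))⁻¹ * Real.exp (-t ^ 2 / 2)

lemma npdf_pos (t : ℝ) : 0 < npdf t := by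
  have : 0 < Real.sqrt (2 * Real.pi) := Real.sqrt_pos.mpr (by positivity)
  exact mul_pos (inv_pos.mpr this) (Real.exp_pos _)

lemma npdf_cont : Continuous npdf := by
  unfold npdf; continuity

lemma npdf_integrable : Integrable npdf := by
  unfold npdf
  apply Integrable.const_mul
  have := integrable_exp_neg_mul_sq (b := (1:ℝ)/2) (by norm_num)
  convert this using 2 with t
  ring

lemma hasDerivAt_cdf (x : ℝ) : HasDerivAt stdNormalCDF (npdf x) x := by
  have key : ∀ y : ℝ, stdNormalCDF y = stdNormalCDF 0 + ∫ t in (0:ℝ)..y, npdf t := by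
    intro y
    have := intervalIntegral.integral_Iic_sub_Iic (f := npdf) (μ := volume) (a := (0:ℝ)) (b := y)
      npdf_integrable.integrableOn npdf_integrable.integrableOn
    simp only [stdNormalCDF, npdf] at this ⊢
    linarith [this]
  have : HasDerivAt (fun y => stdNormalCDF 0 + ∫ t in (0:ℝ)..y, npdf t) (npdf x) x := by
    apply HasDerivAt.const_add
    exact intervalIntegral.integral_hasDerivAt_right
      (npdf_integrable.intervalIntegrable) (npdf_cont.stronglyMeasurableAtFilter _ _)
      npdf_cont.continuousAt
  exact this.congr_of_eventuallyEq (Filter.Eventually.of_forall fun y => key y)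

lemma npdf_even (t : ℝ) : npdf (-t) = npdf t := by
  unfold npdf; ring_nf

lemma npdf_lt (s t : ℝ) (h : s ^ 2 < t ^ 2) : npdf t < npdf s := by
  unfold npdf
  have : 0 < (Real.sqrt (2 * Real.pi))⁻¹ :=
    inv_pos.mpr (Real.sqrt_pos.mpr (by positivity))
  apply mul_lt_mul_of_pos_left _ this
  exact Real.exp_lt_exp.mpr (by linarith)

/-- strict monotonicity in x -/
lemma mono_x (μ : ℝ) : StrictMono (fun x => stdNormalCDF (x - μ) - stdNormalCDF (-x - μ)) := by
  apply strictMono_of_deriv_pos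
  intro x
  have d1 : HasDerivAt (fun x => stdNormalCDF (x - μ)) (npdf (x - μ)) x := by
    have h1 := (hasDerivAt_cdf (x - μ)).comp x ((hasDerivAt_id x).sub_const μ)
    rw [mul_one] at h1; exact h1
  have d2 : HasDerivAt (fun x => stdNormalCDF (-x - μ)) (npdf (-x - μ) * (-1)) x := by
    exact (hasDerivAt_cdf (-x - μ)).comp x (((hasDerivAt_id x).neg).sub_const μ)
  have := (d1.sub d2).deriv
  rw [show (fun x => stdNormalCDF (x - μ) - stdNormalCDF (-x - μ)) = ((fun x => stdNormalCDF (x - μ)) - fun x => stdNormalCDF (-x - μ)) from rfl, this]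
  have := npdf_pos (x - μ); have := npdf_pos (-x - μ)
  linarith

/-- strict antitonicity in μ on Ici 0 for fixed x > 0 -/
lemma anti_mu (x : ℝ) (hx : 0 < x) :
    StrictAntiOn (fun μ => stdNormalCDF (x - μ) - stdNormalCDF (-x - μ)) (Set.Ici 0) := by
  apply strictAntiOn_of_deriv_neg (convex_Ici 0)
  · apply Continuous.continuousOn
    have : Continuous stdNormalCDF := by
      rw [continuous_iff_continuousAt]
      exact fun y => (hasDerivAt_cdf y).continuousAt
    fun_prop
  · intro μ hμ
    rw [interior_Ici] at hμ
    have d1 : HasDerivAt (fun μ => stdNormalCDF (x - μ)) (npdf (x - μ) * (-1)) μ :=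
      (hasDerivAt_cdf (x - μ)).comp μ (by simpa using (hasDerivAt_id μ).const_sub x)
    have d2 : HasDerivAt (fun μ => stdNormalCDF (-x - μ)) (npdf (-x - μ) * (-1)) μ :=
      (hasDerivAt_cdf (-x - μ)).comp μ (by simpa using (hasDerivAt_id μ).const_sub (-x))
    rw [show (fun μ => stdNormalCDF (x - μ) - stdNormalCDF (-x - μ)) = ((fun μ => stdNormalCDF (x - μ)) - fun μ => stdNormalCDF (-x - μ)) from rfl, (d1.sub d2).deriv]
    have he : npdf (-x - μ) = npdf (x + μ) := by
      rw [show -x - μ = -(x + μ) by ring, npdf_even]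
    have hlt : npdf (x + μ) < npdf (x - μ) := by
      apply npdf_lt
      have : 0 < μ := hμ
      nlinarith
    rw [he]
    linarith

/-- The function h(μ) defined implicitly by Φ(h(μ) − μ) − Φ(−h(μ) − μ) = α with
h(μ) > 0 is strictly increasing on (0, ∞). -/
theorem stmt_10 (α : ℝ) (hα : 0 < α) (hα1 : α < 1)
    (h : ℝ → ℝ)
    (hpos : ∀ μ, 0 ≤ μ → 0 < h μ)
    (himp : ∀ μ, 0 ≤ μ → stdNormalCDF (h μ - μ) - stdNormalCDF (-h μ - μ) = α) :
    StrictMonoOn h (Set.Ioi 0) := by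
  intro a ha b hb hab
  simp only [Set.mem_Ioi] at ha hb
  have ha' : (0:ℝ) ≤ a := le_of_lt ha
  have hb' : (0:ℝ) ≤ b := le_of_lt hb
  have key : stdNormalCDF (h b - a) - stdNormalCDF (-h b - a) >
      stdNormalCDF (h b - b) - stdNormalCDF (-h b - b) :=
    anti_mu (h b) (hpos b hb') ha' hb' hab
  have : stdNormalCDF (h b - a) - stdNormalCDF (-h b - a) >
      stdNormalCDF (h a - a) - stdNormalCDF (-h a - a) := by
    rw [himp a ha', himp b hb'] at *
    linarith [himp b hb']
  by_contra hc
  push_neg at hc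
  have := (mono_x a).le_iff_le.mpr hc
  linarith
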